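/- Let E be a connected directed graph, K a field, and I an ideal of the path algebra K\hat{E} of the extended graph such that I contains no edge of E (I ∩ E^1 = ∅). Let A = K\hat{E}/I and let p : K\hat{E} → A be the canonical projection. If E^0 is finite then the intersection of the linear span of p(E^0) with the center Z(A) equals K·1; if E^0 is infinite then this intersection is 0. In particular, for A the Cohn path algebra C_K(E) or the Leavitt path algebra L_K(E) of a connected graph E, span(E^0) ∩ Z(A) = K·1 if E^0 is finite and 0 otherwise. -/

import Mathlib

/-! Basic infrastructure: directed graphs and their path algebras.

The path algebra `KE` is realized as the non-unital subalgebra generated by the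
(images of the) vertices and edges inside the unital algebra `PA K E`, which is the
quotient of the free algebra on vertices and edges by the usual path-algebra
relations (vertices are orthogonal idempotents acting as local units on edges).
Words of composable edges are exactly the paths, so `KE` has the paths as a basis. -/

/-- A directed graph `E = (E⁰, E¹, s, r)`. -/
structure DirGraph : Type 1 where
  V : Type
  Edge : Type
  s : Edge → V
  r : Edge → V

/-- A (non-unital, possibly non-closed) subset `S` of an algebra is *prime* if it is nonzero
and `a S b = 0` implies `a = 0` or `b = 0` for `a, b ∈ S`. -/
def IsPrimeSet {A : Type} [NonUnitalNonAssocSemiring A] (S : Set A) : Prop :=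
  (∃ a ∈ S, a ≠ 0) ∧ ∀ a ∈ S, ∀ b ∈ S, (∀ x ∈ S, a * x * b = 0) → a = 0 ∨ b = 0

/-- `J` is a two-sided ideal of the (possibly non-unital) subalgebra with carrier `S`. -/
def IsIdealOf (K : Type) [Field K] {A : Type} [Ring A] [Algebra K A] (S J : Set A) : Prop :=
  J ⊆ S ∧ (0 : A) ∈ J ∧ (∀ x ∈ J, ∀ y ∈ J, x + y ∈ J) ∧
    (∀ k : K, ∀ x ∈ J, k • x ∈ J) ∧ (∀ a ∈ S, ∀ x ∈ J, a * x ∈ J ∧ x * a ∈ J)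

namespace DirGraph

/-- Generators of the path algebra: vertices and edges. -/
abbrev Gen (E : DirGraph) : Type := E.V ⊕ E.Edge

variable (K : Type) [Field K] (E : DirGraph)

/-- The defining relations of the path algebra: vertices are orthogonal idempotents,
`s(e)·e = e`, `e·r(e) = e`, and all other vertex-edge products vanish. -/
inductive PathRel : FreeAlgebra K E.Gen → FreeAlgebra K E.Gen → Prop
  | vv_eq (u : E.V) :
      PathRel (FreeAlgebra.ι K (Sum.inl u) * FreeAlgebra.ι K (Sum.inl u))
        (FreeAlgebra.ι K (Sum.inl u))
  | vv_ne (u v : E.V) : u ≠ v →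
      PathRel (FreeAlgebra.ι K (Sum.inl u) * FreeAlgebra.ι K (Sum.inl v)) 0
  | ve_eq (e : E.Edge) :
      PathRel (FreeAlgebra.ι K (Sum.inl (E.s e)) * FreeAlgebra.ι K (Sum.inr e))
        (FreeAlgebra.ι K (Sum.inr e))
  | ve_ne (u : E.V) (e : E.Edge) : E.s e ≠ u →
      PathRel (FreeAlgebra.ι K (Sum.inl u) * FreeAlgebra.ι K (Sum.inr e)) 0
  | ev_eq (e : E.Edge) :
      PathRel (FreeAlgebra.ι K (Sum.inr e) * FreeAlgebra.ι K (Sum.inl (E.r e)))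
        (FreeAlgebra.ι K (Sum.inr e))
  | ev_ne (e : E.Edge) (u : E.V) : E.r e ≠ u →
      PathRel (FreeAlgebra.ι K (Sum.inr e) * FreeAlgebra.ι K (Sum.inl u)) 0

/-- The ambient unital algebra (the unitalization of the path algebra). -/
abbrev PA : Type := RingQuot (E.PathRel K)

/-- The image of a vertex in the path algebra. -/
noncomputable def vtx (u : E.V) : E.PA K :=
  RingQuot.mkAlgHom K (E.PathRel K) (FreeAlgebra.ι K (Sum.inl u))

/-- The image of an edge in the path algebra. -/
noncomputable def edg (e : E.Edge) : E.PA K :=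
  RingQuot.mkAlgHom K (E.PathRel K) (FreeAlgebra.ι K (Sum.inr e))

/-- The path algebra `KE`: the (non-unital) subalgebra spanned by all paths, i.e.
generated by the vertices and edges. -/
noncomputable def KE : NonUnitalSubalgebra K (E.PA K) :=
  NonUnitalAlgebra.adjoin K (Set.range (E.vtx K) ∪ Set.range (E.edg K))

/-- The center `Z(KE)` of the path algebra. -/
def relCenter : Set (E.PA K) :=
  {z | z ∈ E.KE K ∧ ∀ a ∈ E.KE K, a * z = z * a}

/-- `E.IsPathFrom u v l` : the list of edges `l` is a path from `u` to `v`
(`l = []` is the trivial path at `u = v`). -/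
def IsPathFrom : E.V → E.V → List E.Edge → Prop
  | u, v, [] => u = v
  | u, v, e :: l => E.s e = u ∧ IsPathFrom (E.r e) v l

/-- The element of the path algebra corresponding to the path starting at `u`
with list of edges `l` (for `l = []` this is the vertex `u` itself). -/
noncomputable def pathElem (u : E.V) (l : List E.Edge) : E.PA K :=
  E.vtx K u * (l.map (E.edg K)).prod

/-- The sum of all vertices: the unit of `KE` when `E⁰` is finite. -/
noncomputable def unitKE : E.PA K := ∑ᶠ u : E.V, E.vtx K u

/-- The scalar multiples `K·1` of the unit of `KE`. -/
noncomputable def scalarSet : Set (E.PA K) := Set.range fun k : K => k • E.unitKE K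

/-- One step in the underlying undirected graph. -/
def Step (u v : E.V) : Prop :=
  (∃ e : E.Edge, E.s e = u ∧ E.r e = v) ∨ (∃ e : E.Edge, E.s e = v ∧ E.r e = u)

/-- `u ∼ v` : the vertices `u` and `v` are connected in the underlying undirected graph. -/
def Connected (u v : E.V) : Prop := Relation.ReflTransGen E.Step u v

/-- The graph `E` is connected. -/
def IsConnectedGraph : Prop := ∀ u v : E.V, E.Connected u v

/-- The graph `E` is a cycle: `n ≥ 1` vertices `u₁, …, uₙ` and `n` edges `f₁, …, fₙ` with
`s(fᵢ) = uᵢ`, `r(fᵢ) = uᵢ₊₁` (indices mod `n`). -/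
def IsCycleGraph : Prop :=
  ∃ n : ℕ, ∃ hn : 0 < n, ∃ (hv : Fin n ≃ E.V) (he : Fin n ≃ E.Edge),
    ∀ i : Fin n, E.s (he i) = hv i ∧ E.r (he i) = hv ⟨(i.1 + 1) % n, Nat.mod_lt _ hn⟩

end DirGraph

namespace DirGraph

/-- The extended graph `Ê`: same vertices, edges `E¹ ⊕ (E¹)*`, where the ghost edge `e*`
(second component) has `s(e*) = r(e)` and `r(e*) = s(e)`. -/
def ext (E : DirGraph) : DirGraph where
  V := E.V
  Edge := E.Edge ⊕ E.Edge
  s := Sum.elim E.s E.r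
  r := Sum.elim E.r E.s

variable (K : Type) [Field K] (E : DirGraph)

/-- Defining relations of the Cohn (`t = false`) and Leavitt (`t = true`) path algebras:
the path-algebra relations of the extended graph, the relations (CK1)
`e*e' = δ_{e,e'} r(e)`, and — only for `t = true` — the relations (CK2)
`v = Σ_{s(e)=v} ee*` at every regular vertex `v`. -/
inductive CLRel : Bool → FreeAlgebra K E.ext.Gen → FreeAlgebra K E.ext.Gen → Prop
  | base (t : Bool) {a b : FreeAlgebra K E.ext.Gen} : E.ext.PathRel K a b → CLRel t a b
  | ck1_eq (t : Bool) (e : E.Edge) :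
      CLRel t (FreeAlgebra.ι K (Sum.inr (Sum.inr e)) * FreeAlgebra.ι K (Sum.inr (Sum.inl e)))
        (FreeAlgebra.ι K (Sum.inl (E.r e)))
  | ck1_ne (t : Bool) (e f : E.Edge) : e ≠ f →
      CLRel t (FreeAlgebra.ι K (Sum.inr (Sum.inr e)) * FreeAlgebra.ι K (Sum.inr (Sum.inl f))) 0
  | ck2 (v : E.V) (h : {e : E.Edge | E.s e = v}.Finite)
      (hne : {e : E.Edge | E.s e = v}.Nonempty) :
      CLRel true (FreeAlgebra.ι K (Sum.inl v))
        (h.toFinset.sum fun e =>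
          FreeAlgebra.ι K (Sum.inr (Sum.inl e)) * FreeAlgebra.ι K (Sum.inr (Sum.inr e)))

/-- The ambient unital algebra containing the Cohn (`t = false`) or
Leavitt (`t = true`) path algebra. -/
abbrev CL (t : Bool) : Type := RingQuot (E.CLRel K t)

/-- The image of a vertex in `C_K(E)` / `L_K(E)`. -/
noncomputable def clvtx (t : Bool) (u : E.V) : E.CL K t :=
  RingQuot.mkAlgHom K (E.CLRel K t) (FreeAlgebra.ι K (Sum.inl u))

/-- The image of a (real) edge in `C_K(E)` / `L_K(E)`. -/
noncomputable def cledg (t : Bool) (e : E.Edge) : E.CL K t :=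
  RingQuot.mkAlgHom K (E.CLRel K t) (FreeAlgebra.ι K (Sum.inr (Sum.inl e)))

/-- The image of a ghost edge `e*` in `C_K(E)` / `L_K(E)`. -/
noncomputable def clghost (t : Bool) (e : E.Edge) : E.CL K t :=
  RingQuot.mkAlgHom K (E.CLRel K t) (FreeAlgebra.ι K (Sum.inr (Sum.inr e)))

/-- The Cohn path algebra `C_K(E)` (`t = false`) or Leavitt path algebra `L_K(E)`
(`t = true`): the non-unital subalgebra generated by vertices, edges, and ghost edges. -/
noncomputable def clSub (t : Bool) : NonUnitalSubalgebra K (E.CL K t) :=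
  NonUnitalAlgebra.adjoin K
    (Set.range (E.clvtx K t) ∪ Set.range (E.cledg K t) ∪ Set.range (E.clghost K t))

/-- The center of `C_K(E)` (`t = false`) or of `L_K(E)` (`t = true`). -/
def clCenter (t : Bool) : Set (E.CL K t) :=
  {z | z ∈ E.clSub K t ∧ ∀ a ∈ E.clSub K t, a * z = z * a}

/-- The element `μ` of `C_K(E)` / `L_K(E)` for the path `μ` starting at `u` with edges `l`. -/
noncomputable def clPath (t : Bool) (u : E.V) (l : List E.Edge) : E.CL K t :=
  E.clvtx K t u * (l.map (E.cledg K t)).prod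

/-- The element `μ*` of `C_K(E)` / `L_K(E)` for the path `μ` starting at `u` with edges `l`. -/
noncomputable def clPathStar (t : Bool) (u : E.V) (l : List E.Edge) : E.CL K t :=
  ((l.map (E.clghost K t)).reverse).prod * E.clvtx K t u

/-- The sum of all vertices: the unit of `C_K(E)` / `L_K(E)` when `E⁰` is finite. -/
noncomputable def clOne (t : Bool) : E.CL K t := ∑ᶠ u : E.V, E.clvtx K t u

/-- The degree-zero component (w.r.t. the canonical ℤ-grading) of `C_K(E)` / `L_K(E)`:
the span of the elements `στ*` with `σ, τ` paths of equal length and common range. -/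
def clDeg0 (t : Bool) : Submodule K (E.CL K t) :=
  Submodule.span K {x : E.CL K t | ∃ (u w v : E.V) (l m : List E.Edge),
    E.IsPathFrom u v l ∧ E.IsPathFrom w v m ∧ l.length = m.length ∧
    x = E.clPath K t u l * E.clPathStar K t w m}

/-- The span of the symmetric elements `μμ*`, `μ` a path of `E`. -/
def clSymmSpan (t : Bool) : Submodule K (E.CL K t) :=
  Submodule.span K {x : E.CL K t | ∃ (u v : E.V) (l : List E.Edge),
    E.IsPathFrom u v l ∧ x = E.clPath K t u l * E.clPathStar K t u l}

/-- A subset `H ⊆ E⁰` is hereditary if paths starting in `H` end in `H`. -/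
def Hereditary (H : Set E.V) : Prop :=
  ∀ (u v : E.V) (l : List E.Edge), E.IsPathFrom u v l → u ∈ H → v ∈ H

/-- The two-sided ideal of `C_K(E)` / `L_K(E)` generated by a subset `S₀`. -/
def clIdealGen (t : Bool) (S₀ : Set (E.CL K t)) : Set (E.CL K t) :=
  ⋂₀ {J : Set (E.CL K t) | IsIdealOf K (E.clSub K t : Set (E.CL K t)) J ∧ S₀ ⊆ J}

/-- `c` is a cycle based at `u`: a nontrivial closed path visiting no vertex twice. -/
def IsCycle (u : E.V) (l : List E.Edge) : Prop :=
  l ≠ [] ∧ E.IsPathFrom u u l ∧ (l.map E.s).Nodup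

/-- The (closed) path `l` has an exit. -/
def HasExit (l : List E.Edge) : Prop :=
  ∃ f : E.Edge, ∃ e ∈ l, E.s f = E.s e ∧ f ≠ e

/-- Condition (L): every cycle of `E` has an exit. -/
def CondL : Prop := ∀ (u : E.V) (l : List E.Edge), E.IsCycle u l → E.HasExit l

/-- The set of paths (given by their source and list of edges) that end at a vertex of the
cycle `c` and do not contain all the edges of `c`. -/
def endsAtNotContaining (c : List E.Edge) : Set (E.V × List E.Edge) :=
  {p | (∃ v : E.V, (∃ e ∈ c, E.s e = v) ∧ E.IsPathFrom p.1 v p.2) ∧ ∃ e ∈ c, e ∉ p.2}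

/-- `c` is the unique cycle of `E` without exits (uniqueness as a cycle: any cycle
without exits has the same edges as `c`). -/
def UniqueNoExitCycle (c : List E.Edge) : Prop :=
  (∃ u : E.V, E.IsCycle u c ∧ ¬ E.HasExit c) ∧
    ∀ (u' : E.V) (c' : List E.Edge), E.IsCycle u' c' → ¬ E.HasExit c' →
      ∀ e : E.Edge, e ∈ c' ↔ e ∈ c

end DirGraph

/-! ### Auxiliary lemmas for the proof of Statement 10 -/

namespace DirGraph

open scoped Classical

section PALemmas

variable (K : Type) [Field K] (E : DirGraph)

open scoped Classical

lemma vtx_mul_vtx (u v : E.V) :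
    E.vtx K u * E.vtx K v = if u = v then E.vtx K u else 0 := by
  unfold vtx
  rw [← map_mul]
  split_ifs with h
  · subst h; exact RingQuot.mkAlgHom_rel K (PathRel.vv_eq u)
  · rw [RingQuot.mkAlgHom_rel K (PathRel.vv_ne u v h), map_zero]

lemma vtx_mul_edg (u : E.V) (f : E.Edge) :
    E.vtx K u * E.edg K f = if E.s f = u then E.edg K f else 0 := by
  unfold vtx edg
  rw [← map_mul]
  split_ifs with h
  · subst h; exact RingQuot.mkAlgHom_rel K (PathRel.ve_eq f)
  · rw [RingQuot.mkAlgHom_rel K (PathRel.ve_ne u f h), map_zero]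

lemma edg_mul_vtx (f : E.Edge) (u : E.V) :
    E.edg K f * E.vtx K u = if E.r f = u then E.edg K f else 0 := by
  unfold vtx edg
  rw [← map_mul]
  split_ifs with h
  · subst h; exact RingQuot.mkAlgHom_rel K (PathRel.ev_eq f)
  · rw [RingQuot.mkAlgHom_rel K (PathRel.ev_ne f u h), map_zero]

lemma vtx_mem (u : E.V) : E.vtx K u ∈ E.KE K :=
  NonUnitalAlgebra.subset_adjoin K (Set.mem_union_left _ ⟨u, rfl⟩)

lemma edg_mem (e : E.Edge) : E.edg K e ∈ E.KE K :=
  NonUnitalAlgebra.subset_adjoin K (Set.mem_union_right _ ⟨e, rfl⟩)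

lemma finsuppSum_mul_edg (c : E.V →₀ K) (f : E.Edge) :
    (c.sum fun u a => a • E.vtx K u) * E.edg K f = c (E.s f) • E.edg K f := by
  rw [Finsupp.sum_mul]
  have h1 : ∀ u a, a • E.vtx K u * E.edg K f
      = if E.s f = u then (fun (u : E.V) (a : K) => a • E.edg K f) u a else 0 := by
    intro u a; rw [smul_mul_assoc, vtx_mul_edg]; split_ifs <;> simp
  simp only [h1]
  rw [Finsupp.sum_ite_eq]
  split_ifs with h
  · rfl
  · rw [Finsupp.notMem_support_iff.mp h, zero_smul]

lemma edg_mul_finsuppSum (c : E.V →₀ K) (f : E.Edge) :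
    E.edg K f * (c.sum fun u a => a • E.vtx K u) = c (E.r f) • E.edg K f := by
  rw [Finsupp.mul_sum]
  have h1 : ∀ u a, E.edg K f * (a • E.vtx K u)
      = if E.r f = u then (fun (u : E.V) (a : K) => a • E.edg K f) u a else 0 := by
    intro u a; rw [mul_smul_comm, edg_mul_vtx]; split_ifs <;> simp
  simp only [h1]
  rw [Finsupp.sum_ite_eq]
  split_ifs with h
  · rfl
  · rw [Finsupp.notMem_support_iff.mp h, zero_smul]

lemma local_unit (hsup : (Function.support fun u => E.vtx K u).Finite) :
    ∀ a ∈ E.KE K, a * E.unitKE K = a ∧ E.unitKE K * a = a := by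
  have hunit : E.unitKE K = ∑ u ∈ hsup.toFinset, E.vtx K u := finsum_eq_sum _ hsup
  have hv0 : ∀ u : E.V, u ∉ hsup.toFinset → E.vtx K u = 0 := by
    intro u hu
    by_contra h
    exact hu (hsup.mem_toFinset.mpr h)
  have hvtx : ∀ v : E.V, E.vtx K v * E.unitKE K = E.vtx K v ∧ E.unitKE K * E.vtx K v = E.vtx K v := by
    intro v
    constructor
    · rw [hunit, Finset.mul_sum]
      simp only [vtx_mul_vtx]
      rw [Finset.sum_ite_eq]
      split_ifs with h
      · rfl
      · exact (hv0 v h).symm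
    · rw [hunit, Finset.sum_mul]
      simp only [vtx_mul_vtx]
      rw [Finset.sum_ite_eq']
      split_ifs with h
      · rfl
      · exact (hv0 v h).symm
  have hedg : ∀ e : E.Edge, E.edg K e * E.unitKE K = E.edg K e ∧ E.unitKE K * E.edg K e = E.edg K e := by
    intro e
    constructor
    · rw [hunit, Finset.mul_sum]
      simp only [edg_mul_vtx]
      rw [Finset.sum_ite_eq]
      split_ifs with h
      · rfl
      · have h1 : E.edg K e * E.vtx K (E.r e) = E.edg K e := by
          rw [edg_mul_vtx, if_pos rfl]
        rw [← h1, hv0 _ h, mul_zero]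
    · rw [hunit, Finset.sum_mul]
      simp only [vtx_mul_edg]
      rw [Finset.sum_ite_eq]
      split_ifs with h
      · rfl
      · have h1 : E.vtx K (E.s e) * E.edg K e = E.edg K e := by
          rw [vtx_mul_edg, if_pos rfl]
        rw [← h1, hv0 _ h, zero_mul]
  intro a ha
  induction ha using NonUnitalAlgebra.adjoin_induction with
  | mem x hx =>
      rcases hx with ⟨u, rfl⟩ | ⟨e, rfl⟩
      · exact hvtx u
      · exact hedg e
  | add x y _ _ hx hy => exact ⟨by rw [add_mul, hx.1, hy.1], by rw [mul_add, hx.2, hy.2]⟩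
  | zero => exact ⟨zero_mul _, mul_zero _⟩
  | mul x y _ _ hx hy =>
      exact ⟨by rw [mul_assoc, hy.1], by rw [← mul_assoc, hx.2]⟩
  | smul k x _ hx => exact ⟨by rw [smul_mul_assoc, hx.1], by rw [mul_smul_comm, hx.2]⟩


end PALemmas

/-- choose an edge out of `v` when `v` is regular. -/
noncomputable def nxt (E : DirGraph) (v : E.V) : Option E.Edge :=
  if h : {e : E.Edge | E.s e = v}.Finite ∧ {e : E.Edge | E.s e = v}.Nonempty
  then some h.2.choose else none

lemma nxt_some_src (E : DirGraph) {v : E.V} {e : E.Edge} (h : E.nxt v = some e) : E.s e = v := by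
  unfold nxt at h
  split_ifs at h with hc
  · have := hc.2.choose_spec
    rw [Option.some.injEq] at h
    rw [← h]; exact this

lemma nxt_ne_none (E : DirGraph) {v : E.V} (hfin : {e : E.Edge | E.s e = v}.Finite)
    (hne : {e : E.Edge | E.s e = v}.Nonempty) : E.nxt v ≠ none := by
  unfold nxt
  rw [dif_pos ⟨hfin, hne⟩]
  simp

/-- A maximal path: a finite path ending at a non-regular vertex, or an infinite path. -/
structure MaxPath (E : DirGraph) where
  v : E.V
  f : ℕ → Option E.Edge
  h0 : ∀ e, f 0 = some e → E.s e = v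
  hstep : ∀ n e e', f n = some e → f (n + 1) = some e' → E.s e' = E.r e
  hnone : ∀ n, f n = none → f (n + 1) = none
  hmax0 : f 0 = none → E.nxt v = none
  hmaxs : ∀ n e, f n = some e → f (n + 1) = none → E.nxt (E.r e) = none

variable {E : DirGraph}

lemma MaxPath.ext' {p q : MaxPath E} (h1 : p.v = q.v) (h2 : p.f = q.f) : p = q := by
  cases p; cases q; simp_all

def MaxPath.cons (e : E.Edge) (p : MaxPath E) (h : E.r e = p.v) : MaxPath E where
  v := E.s e
  f := fun n => match n with | 0 => some e | Nat.succ m => p.f m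
  h0 := fun e' he => by simp only [Option.some.injEq] at he; rw [he]
  hstep := by
    intro n e₁ e₂ h1 h2
    match n with
    | 0 =>
      simp only [Option.some.injEq] at h1
      subst h1
      exact (p.h0 e₂ h2).trans h.symm
    | Nat.succ m => exact p.hstep m e₁ e₂ h1 h2
  hnone := by
    intro n hn
    match n with
    | 0 => simp at hn
    | Nat.succ m => exact p.hnone m hn
  hmax0 := by intro h0; simp at h0
  hmaxs := by
    intro n e₁ h1 h2
    match n with
    | 0 =>
      simp only [Option.some.injEq] at h1
      subst h1
      rw [h]
      exact p.hmax0 h2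
    | Nat.succ m => exact p.hmaxs m e₁ h1 h2

def MaxPath.tail (p : MaxPath E) (e : E.Edge) (h : p.f 0 = some e) : MaxPath E where
  v := E.r e
  f := fun n => p.f (n + 1)
  h0 := fun e' he => p.hstep 0 e e' h he
  hstep := fun n e₁ e₂ h1 h2 => p.hstep (n + 1) e₁ e₂ h1 h2
  hnone := fun n hn => p.hnone (n + 1) hn
  hmax0 := fun h1 => p.hmaxs 0 e h h1
  hmaxs := fun n e₁ h1 h2 => p.hmaxs (n + 1) e₁ h1 h2

@[simp] lemma MaxPath.cons_v (e : E.Edge) (p : MaxPath E) (h : E.r e = p.v) :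
    (p.cons e h).v = E.s e := rfl

@[simp] lemma MaxPath.tail_v (p : MaxPath E) (e : E.Edge) (h : p.f 0 = some e) :
    (p.tail e h).v = E.r e := rfl

@[simp] lemma MaxPath.cons_f_zero (e : E.Edge) (p : MaxPath E) (h : E.r e = p.v) :
    (p.cons e h).f 0 = some e := rfl

lemma MaxPath.tail_cons (p : MaxPath E) (e : E.Edge) (h : E.r e = p.v)
    (h2 : (p.cons e h).f 0 = some e) : (p.cons e h).tail e h2 = p := by
  apply ext'
  · exact h
  · rfl

lemma MaxPath.cons_tail (p : MaxPath E) (e : E.Edge) (h : p.f 0 = some e)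
    (h2 : E.r e = (p.tail e h).v) : (p.tail e h).cons e h2 = p := by
  apply ext'
  · exact p.h0 e h
  · funext n
    match n with
    | 0 => exact h.symm
    | Nat.succ m => rfl

noncomputable def fseq (E : DirGraph) (v : E.V) : ℕ → Option E.Edge
  | 0 => E.nxt v
  | n + 1 => (E.fseq v n).bind fun e => E.nxt (E.r e)

noncomputable def MaxPath.fromVtx (E : DirGraph) (v : E.V) : MaxPath E where
  v := v
  f := E.fseq v
  h0 := fun _ he => E.nxt_some_src he
  hstep := by
    intro n e e' h1 h2
    rw [show E.fseq v (n+1) = (E.fseq v n).bind fun e => E.nxt (E.r e) from rfl, h1] at h2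
    exact E.nxt_some_src h2
  hnone := by
    intro n hn
    rw [show E.fseq v (n+1) = (E.fseq v n).bind fun e => E.nxt (E.r e) from rfl, hn]
    rfl
  hmax0 := fun h => h
  hmaxs := by
    intro n e h1 h2
    rw [show E.fseq v (n+1) = (E.fseq v n).bind fun e => E.nxt (E.r e) from rfl, h1] at h2
    exact h2

@[simp] lemma MaxPath.fromVtx_v (E : DirGraph) (v : E.V) : (MaxPath.fromVtx E v).v = v := rfl

lemma MaxPath.f_zero_ne_none (p : MaxPath E) (hfin : {e : E.Edge | E.s e = p.v}.Finite)
    (hne : {e : E.Edge | E.s e = p.v}.Nonempty) : p.f 0 ≠ none := by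
  intro h
  exact E.nxt_ne_none hfin hne (p.hmax0 h)



variable (K : Type) [Field K] (E : DirGraph)

noncomputable def Tvtx (u : E.V) : Module.End K (MaxPath E →₀ K) :=
  Finsupp.linearCombination K fun p : MaxPath E =>
    if u = p.v then Finsupp.single p (1 : K) else 0

noncomputable def Tedg (e : E.Edge) : Module.End K (MaxPath E →₀ K) :=
  Finsupp.linearCombination K fun p : MaxPath E =>
    if h : E.r e = p.v then Finsupp.single (p.cons e h) (1 : K) else 0

noncomputable def Tghost (e : E.Edge) : Module.End K (MaxPath E →₀ K) :=
  Finsupp.linearCombination K fun p : MaxPath E =>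
    if h : p.f 0 = some e then Finsupp.single (p.tail e h) (1 : K) else 0

lemma Tvtx_apply (u : E.V) (p : MaxPath E) :
    Tvtx K E u (Finsupp.single p 1) = if u = p.v then Finsupp.single p (1 : K) else 0 := by
  unfold Tvtx
  rw [Finsupp.linearCombination_single, one_smul]

lemma Tedg_apply (e : E.Edge) (p : MaxPath E) :
    Tedg K E e (Finsupp.single p 1)
      = if h : E.r e = p.v then Finsupp.single (p.cons e h) (1 : K) else 0 := by
  unfold Tedg
  rw [Finsupp.linearCombination_single, one_smul]

lemma Tghost_apply (e : E.Edge) (p : MaxPath E) :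
    Tghost K E e (Finsupp.single p 1)
      = if h : p.f 0 = some e then Finsupp.single (p.tail e h) (1 : K) else 0 := by
  unfold Tghost
  rw [Finsupp.linearCombination_single, one_smul]

section rels
variable {E}

/-- reduce an `End` equality to values on basis vectors. -/
lemma end_ext {S T : Module.End K (MaxPath E →₀ K)}
    (h : ∀ p : MaxPath E, S (Finsupp.single p 1) = T (Finsupp.single p 1)) : S = T := by
  refine Finsupp.lhom_ext' fun p => LinearMap.ext_ring ?_
  simpa using h p

lemma Tvv_eq (u : E.V) : Tvtx K E u * Tvtx K E u = Tvtx K E u := by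
  refine end_ext K fun p => ?_
  rw [Module.End.mul_apply, Tvtx_apply]
  split_ifs with h
  · rw [Tvtx_apply, if_pos h]
  · rw [map_zero]

lemma Tvv_ne {u v : E.V} (h : u ≠ v) : Tvtx K E u * Tvtx K E v = 0 := by
  refine end_ext K fun p => ?_
  rw [Module.End.mul_apply, Tvtx_apply]
  split_ifs with h1
  · rw [Tvtx_apply, if_neg (h1 ▸ h), LinearMap.zero_apply]
  · rw [map_zero, LinearMap.zero_apply]

lemma Tve_edg (e : E.Edge) : Tvtx K E (E.s e) * Tedg K E e = Tedg K E e := by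
  refine end_ext K fun p => ?_
  rw [Module.End.mul_apply, Tedg_apply]
  split_ifs with h
  · rw [Tvtx_apply, if_pos (by simp)]
  · rw [map_zero]

lemma Tve_edg_ne {u : E.V} (e : E.Edge) (h : E.s e ≠ u) : Tvtx K E u * Tedg K E e = 0 := by
  refine end_ext K fun p => ?_
  rw [Module.End.mul_apply, Tedg_apply, LinearMap.zero_apply]
  split_ifs with h1
  · rw [Tvtx_apply, if_neg (by simpa using fun hh => h hh.symm)]
  · rw [map_zero]

lemma Tve_gh (e : E.Edge) : Tvtx K E (E.r e) * Tghost K E e = Tghost K E e := by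
  refine end_ext K fun p => ?_
  rw [Module.End.mul_apply, Tghost_apply]
  split_ifs with h
  · rw [Tvtx_apply, if_pos (by simp)]
  · rw [map_zero]

lemma Tve_gh_ne {u : E.V} (e : E.Edge) (h : E.r e ≠ u) : Tvtx K E u * Tghost K E e = 0 := by
  refine end_ext K fun p => ?_
  rw [Module.End.mul_apply, Tghost_apply, LinearMap.zero_apply]
  split_ifs with h1
  · rw [Tvtx_apply, if_neg (by simpa using fun hh => h hh.symm)]
  · rw [map_zero]

lemma Tev_edg (e : E.Edge) : Tedg K E e * Tvtx K E (E.r e) = Tedg K E e := by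
  refine end_ext K fun p => ?_
  rw [Module.End.mul_apply, Tvtx_apply]
  split_ifs with h
  · rfl
  · rw [map_zero, Tedg_apply, dif_neg h]

lemma Tev_edg_ne {u : E.V} (e : E.Edge) (h : E.r e ≠ u) : Tedg K E e * Tvtx K E u = 0 := by
  refine end_ext K fun p => ?_
  rw [Module.End.mul_apply, Tvtx_apply, LinearMap.zero_apply]
  split_ifs with h1
  · rw [Tedg_apply, dif_neg (h1 ▸ h)]
  · rw [map_zero]

lemma Tev_gh (e : E.Edge) : Tghost K E e * Tvtx K E (E.s e) = Tghost K E e := by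
  refine end_ext K fun p => ?_
  rw [Module.End.mul_apply, Tvtx_apply]
  split_ifs with h
  · rfl
  · rw [map_zero, Tghost_apply, dif_neg (fun hc => h (p.h0 e hc))]

lemma Tev_gh_ne {u : E.V} (e : E.Edge) (h : E.s e ≠ u) : Tghost K E e * Tvtx K E u = 0 := by
  refine end_ext K fun p => ?_
  rw [Module.End.mul_apply, Tvtx_apply, LinearMap.zero_apply]
  split_ifs with h1
  · rw [Tghost_apply, dif_neg (fun hc => h ((p.h0 e hc).trans h1.symm))]
  · rw [map_zero]

lemma Tck1_eq (e : E.Edge) : Tghost K E e * Tedg K E e = Tvtx K E (E.r e) := by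
  refine end_ext K fun p => ?_
  rw [Module.End.mul_apply, Tedg_apply, Tvtx_apply]
  split_ifs with h
  · rw [Tghost_apply, dif_pos (MaxPath.cons_f_zero e p h), MaxPath.tail_cons]
  · rw [map_zero]

lemma Tck1_ne {e f : E.Edge} (h : e ≠ f) : Tghost K E e * Tedg K E f = 0 := by
  refine end_ext K fun p => ?_
  rw [Module.End.mul_apply, Tedg_apply, LinearMap.zero_apply]
  split_ifs with h1
  · rw [Tghost_apply, dif_neg (by simpa using fun hc => h hc.symm)]
  · rw [map_zero]

lemma Tck2 (v : E.V) (hfin : {e : E.Edge | E.s e = v}.Finite)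
    (hne : {e : E.Edge | E.s e = v}.Nonempty) :
    Tvtx K E v = ∑ e ∈ hfin.toFinset, Tedg K E e * Tghost K E e := by
  refine end_ext K fun p => ?_
  rw [LinearMap.sum_apply, Tvtx_apply]
  rcases hb : p.f 0 with _ | e₀
  · -- no first edge: `p.v` is non-regular, so `v ≠ p.v`
    have hv : v ≠ p.v := by
      rintro rfl
      exact MaxPath.f_zero_ne_none p hfin hne hb
    rw [if_neg hv]
    refine (Finset.sum_eq_zero fun e _ => ?_).symm
    rw [Module.End.mul_apply, Tghost_apply, dif_neg (by rw [hb]; simp), map_zero]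
  · have hsrc : E.s e₀ = p.v := p.h0 e₀ hb
    by_cases hv : v = p.v
    · rw [if_pos hv]
      have hmem : e₀ ∈ hfin.toFinset := hfin.mem_toFinset.mpr (hsrc.trans hv.symm)
      rw [Finset.sum_eq_single_of_mem e₀ hmem (fun e _ hne' => by
        rw [Module.End.mul_apply, Tghost_apply,
          dif_neg (by rw [hb]; simpa using fun hc => hne' hc.symm), map_zero])]
      rw [Module.End.mul_apply, Tghost_apply, dif_pos hb, Tedg_apply,
        dif_pos (MaxPath.tail_v p e₀ hb).symm, MaxPath.cons_tail]
    · rw [if_neg hv]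
      refine (Finset.sum_eq_zero fun e he => ?_).symm
      have hse : E.s e = v := hfin.mem_toFinset.mp he
      have hne' : e ≠ e₀ := fun hc => hv ((hse.symm.trans (hc ▸ hsrc)))
      rw [Module.End.mul_apply, Tghost_apply,
        dif_neg (by rw [hb]; simpa using fun hc => hne' hc.symm), map_zero]

lemma Tedg_ne (e : E.Edge) {κ : K} (h : κ • Tedg K E e = 0) : κ = 0 := by
  have h2 := congrFun (congrArg DFunLike.coe h)
    (Finsupp.single (MaxPath.fromVtx E (E.r e)) 1)
  rw [LinearMap.smul_apply, LinearMap.zero_apply, Tedg_apply,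
    dif_pos (MaxPath.fromVtx_v E (E.r e)).symm, Finsupp.smul_single, smul_eq_mul, mul_one]
    at h2
  exact (Finsupp.single_eq_zero.mp h2)

end rels

section CLlemmas

variable (K : Type) [Field K] (E : DirGraph) (t : Bool)

lemma clvtx_mul_clvtx (u v : E.V) :
    E.clvtx K t u * E.clvtx K t v = if u = v then E.clvtx K t u else 0 := by
  unfold clvtx
  rw [← map_mul]
  split_ifs with h
  · subst h; exact RingQuot.mkAlgHom_rel K (CLRel.base t (PathRel.vv_eq (E := E.ext) u))
  · rw [RingQuot.mkAlgHom_rel K (CLRel.base t (PathRel.vv_ne (E := E.ext) u v h)), map_zero]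

lemma clvtx_mul_cledg (u : E.V) (e : E.Edge) :
    E.clvtx K t u * E.cledg K t e = if E.s e = u then E.cledg K t e else 0 := by
  unfold clvtx cledg
  rw [← map_mul]
  split_ifs with h
  · subst h; exact RingQuot.mkAlgHom_rel K (CLRel.base t (PathRel.ve_eq (E := E.ext) (Sum.inl e)))
  · rw [RingQuot.mkAlgHom_rel K (CLRel.base t (PathRel.ve_ne (E := E.ext) u (Sum.inl e) h)), map_zero]

lemma cledg_mul_clvtx (e : E.Edge) (u : E.V) :
    E.cledg K t e * E.clvtx K t u = if E.r e = u then E.cledg K t e else 0 := by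
  unfold clvtx cledg
  rw [← map_mul]
  split_ifs with h
  · subst h; exact RingQuot.mkAlgHom_rel K (CLRel.base t (PathRel.ev_eq (E := E.ext) (Sum.inl e)))
  · rw [RingQuot.mkAlgHom_rel K (CLRel.base t (PathRel.ev_ne (E := E.ext) (Sum.inl e) u h)), map_zero]

lemma clvtx_mul_clghost (u : E.V) (e : E.Edge) :
    E.clvtx K t u * E.clghost K t e = if E.r e = u then E.clghost K t e else 0 := by
  unfold clvtx clghost
  rw [← map_mul]
  split_ifs with h
  · subst h; exact RingQuot.mkAlgHom_rel K (CLRel.base t (PathRel.ve_eq (E := E.ext) (Sum.inr e)))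
  · rw [RingQuot.mkAlgHom_rel K (CLRel.base t (PathRel.ve_ne (E := E.ext) u (Sum.inr e) h)), map_zero]

lemma clghost_mul_clvtx (e : E.Edge) (u : E.V) :
    E.clghost K t e * E.clvtx K t u = if E.s e = u then E.clghost K t e else 0 := by
  unfold clvtx clghost
  rw [← map_mul]
  split_ifs with h
  · subst h; exact RingQuot.mkAlgHom_rel K (CLRel.base t (PathRel.ev_eq (E := E.ext) (Sum.inr e)))
  · rw [RingQuot.mkAlgHom_rel K (CLRel.base t (PathRel.ev_ne (E := E.ext) (Sum.inr e) u h)), map_zero]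

lemma clvtx_mem (u : E.V) : E.clvtx K t u ∈ E.clSub K t :=
  NonUnitalAlgebra.subset_adjoin K
    (Set.mem_union_left _ (Set.mem_union_left _ ⟨u, rfl⟩))

lemma cledg_mem (e : E.Edge) : E.cledg K t e ∈ E.clSub K t :=
  NonUnitalAlgebra.subset_adjoin K
    (Set.mem_union_left _ (Set.mem_union_right _ ⟨e, rfl⟩))

lemma clghost_mem (e : E.Edge) : E.clghost K t e ∈ E.clSub K t :=
  NonUnitalAlgebra.subset_adjoin K (Set.mem_union_right _ ⟨e, rfl⟩)

lemma cl_finsuppSum_mul_cledg (c : E.V →₀ K) (f : E.Edge) :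
    (c.sum fun u a => a • E.clvtx K t u) * E.cledg K t f = c (E.s f) • E.cledg K t f := by
  rw [Finsupp.sum_mul]
  have h1 : ∀ u a, a • E.clvtx K t u * E.cledg K t f
      = if E.s f = u then (fun (_ : E.V) (a : K) => a • E.cledg K t f) u a else 0 := by
    intro u a; rw [smul_mul_assoc, clvtx_mul_cledg]; split_ifs <;> simp
  simp only [h1]
  rw [Finsupp.sum_ite_eq]
  split_ifs with h
  · rfl
  · rw [Finsupp.notMem_support_iff.mp h, zero_smul]

lemma cledg_mul_cl_finsuppSum (c : E.V →₀ K) (f : E.Edge) :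
    E.cledg K t f * (c.sum fun u a => a • E.clvtx K t u) = c (E.r f) • E.cledg K t f := by
  rw [Finsupp.mul_sum]
  have h1 : ∀ u a, E.cledg K t f * (a • E.clvtx K t u)
      = if E.r f = u then (fun (_ : E.V) (a : K) => a • E.cledg K t f) u a else 0 := by
    intro u a; rw [mul_smul_comm, cledg_mul_clvtx]; split_ifs <;> simp
  simp only [h1]
  rw [Finsupp.sum_ite_eq]
  split_ifs with h
  · rfl
  · rw [Finsupp.notMem_support_iff.mp h, zero_smul]

lemma cl_local_unit [Fintype E.V] :
    ∀ a ∈ E.clSub K t, a * E.clOne K t = a ∧ E.clOne K t * a = a := by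
  have hunit : E.clOne K t = ∑ u : E.V, E.clvtx K t u := by
    unfold clOne; exact finsum_eq_sum_of_fintype _
  have hvtx : ∀ v : E.V, E.clvtx K t v * E.clOne K t = E.clvtx K t v ∧
      E.clOne K t * E.clvtx K t v = E.clvtx K t v := by
    intro v
    constructor
    · rw [hunit, Finset.mul_sum]
      simp only [clvtx_mul_clvtx]
      rw [Finset.sum_ite_eq, if_pos (Finset.mem_univ v)]
    · rw [hunit, Finset.sum_mul]
      simp only [clvtx_mul_clvtx]
      rw [Finset.sum_ite_eq', if_pos (Finset.mem_univ v)]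
  have hedg : ∀ e : E.Edge, E.cledg K t e * E.clOne K t = E.cledg K t e ∧
      E.clOne K t * E.cledg K t e = E.cledg K t e := by
    intro e
    constructor
    · rw [hunit, Finset.mul_sum]
      simp only [cledg_mul_clvtx]
      rw [Finset.sum_ite_eq, if_pos (Finset.mem_univ _)]
    · rw [hunit, Finset.sum_mul]
      simp only [clvtx_mul_cledg]
      rw [Finset.sum_ite_eq, if_pos (Finset.mem_univ _)]
  have hgh : ∀ e : E.Edge, E.clghost K t e * E.clOne K t = E.clghost K t e ∧
      E.clOne K t * E.clghost K t e = E.clghost K t e := by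
    intro e
    constructor
    · rw [hunit, Finset.mul_sum]
      simp only [clghost_mul_clvtx]
      rw [Finset.sum_ite_eq, if_pos (Finset.mem_univ _)]
    · rw [hunit, Finset.sum_mul]
      simp only [clvtx_mul_clghost]
      rw [Finset.sum_ite_eq, if_pos (Finset.mem_univ _)]
  intro a ha
  induction ha using NonUnitalAlgebra.adjoin_induction with
  | mem x hx =>
      rcases hx with (⟨u, rfl⟩ | ⟨e, rfl⟩) | ⟨e, rfl⟩
      · exact hvtx u
      · exact hedg e
      · exact hgh e
  | add x y _ _ hx hy => exact ⟨by rw [add_mul, hx.1, hy.1], by rw [mul_add, hx.2, hy.2]⟩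
  | zero => exact ⟨zero_mul _, mul_zero _⟩
  | mul x y _ _ hx hy =>
      exact ⟨by rw [mul_assoc, hy.1], by rw [← mul_assoc, hx.2]⟩
  | smul k x _ hx => exact ⟨by rw [smul_mul_assoc, hx.1], by rw [mul_smul_comm, hx.2]⟩

/-- the generators of the representation of `C_K(E)` / `L_K(E)` on maximal paths. -/
noncomputable def gmap : E.ext.Gen → Module.End K (MaxPath E →₀ K) :=
  Sum.elim (Tvtx K E) (Sum.elim (Tedg K E) (Tghost K E))

lemma lift_rel : ∀ ⦃a b : FreeAlgebra K E.ext.Gen⦄, E.CLRel K t a b →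
    FreeAlgebra.lift K (gmap K E) a = FreeAlgebra.lift K (gmap K E) b := by
  intro a b h
  induction h with
  | base t hp =>
    cases hp with
    | vv_eq u =>
        rw [map_mul]
        simp only [FreeAlgebra.lift_ι_apply, gmap, Sum.elim_inl]
        exact Tvv_eq (E := E) K u
    | vv_ne u v h =>
        rw [map_mul, map_zero]
        simp only [FreeAlgebra.lift_ι_apply, gmap, Sum.elim_inl]
        exact Tvv_ne (E := E) K h
    | ve_eq g =>
        rw [map_mul]
        simp only [FreeAlgebra.lift_ι_apply, gmap, Sum.elim_inl, Sum.elim_inr]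
        cases g with
        | inl e => exact Tve_edg K e
        | inr e => exact Tve_gh K e
    | ve_ne u g h =>
        rw [map_mul, map_zero]
        simp only [FreeAlgebra.lift_ι_apply, gmap, Sum.elim_inl, Sum.elim_inr]
        cases g with
        | inl e => exact Tve_edg_ne K e h
        | inr e => exact Tve_gh_ne K e h
    | ev_eq g =>
        rw [map_mul]
        simp only [FreeAlgebra.lift_ι_apply, gmap, Sum.elim_inl, Sum.elim_inr]
        cases g with
        | inl e => exact Tev_edg K e
        | inr e => exact Tev_gh K e
    | ev_ne g u h =>
        rw [map_mul, map_zero]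
        simp only [FreeAlgebra.lift_ι_apply, gmap, Sum.elim_inl, Sum.elim_inr]
        cases g with
        | inl e => exact Tev_edg_ne K e h
        | inr e => exact Tev_gh_ne K e h
  | ck1_eq t e =>
      refine (map_mul (FreeAlgebra.lift K (gmap K E)) _ _).trans ?_
      simp only [FreeAlgebra.lift_ι_apply, gmap, Sum.elim_inl, Sum.elim_inr]
      have h1 := FreeAlgebra.lift_ι_apply (R := K) (gmap K E)
      exact (congrArg₂ (· * ·) (h1 _) (h1 _)).trans (Tck1_eq K e)
  | ck1_ne t e f h =>
      refine (map_mul (FreeAlgebra.lift K (gmap K E)) _ _).trans ?_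
      rw [map_zero]
      simp only [FreeAlgebra.lift_ι_apply, gmap, Sum.elim_inr]
      have h1 := FreeAlgebra.lift_ι_apply (R := K) (gmap K E)
      exact (congrArg₂ (· * ·) (h1 _) (h1 _)).trans (Tck1_ne K h)
  | ck2 v hfin hne =>
      rw [map_sum]
      simp only [map_mul, FreeAlgebra.lift_ι_apply, gmap, Sum.elim_inl, Sum.elim_inr]
      refine (Tck2 K v hfin hne).trans (Finset.sum_congr rfl fun x _ => ?_)
      refine Eq.trans ?_ (map_mul (FreeAlgebra.lift K _) _ _).symm
      have h1 := FreeAlgebra.lift_ι_apply (R := K) (gmap K E)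
      exact (congrArg₂ (· * ·) (h1 (Sum.inr (Sum.inl x))) (h1 (Sum.inr (Sum.inr x)))).symm

/-- The representation of `C_K(E)` / `L_K(E)` on the maximal paths of `E`. -/
noncomputable def rep : E.CL K t →ₐ[K] Module.End K (MaxPath E →₀ K) :=
  RingQuot.liftAlgHom K ⟨FreeAlgebra.lift K (gmap K E), lift_rel K E t⟩

lemma cledg_smul_eq_zero {e : E.Edge} {κ : K} (h : κ • E.cledg K t e = 0) : κ = 0 := by
  have hrep : rep K E t (E.cledg K t e) = Tedg K E e := by
    unfold rep cledg
    rw [RingQuot.liftAlgHom_mkAlgHom_apply, FreeAlgebra.lift_ι_apply]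
    rfl
  have h1 : κ • Tedg K E e = 0 := by
    rw [← hrep, ← map_smul, h, map_zero]
  exact Tedg_ne K e h1

omit [Field K] in
lemma const_of_conn {c : E.V → K} (hconn : E.IsConnectedGraph)
    (hstep : ∀ e : E.Edge, c (E.s e) = c (E.r e)) (u v : E.V) : c u = c v := by
  induction hconn u v with
  | refl => rfl
  | tail _ h ih =>
    rcases h with ⟨e, he1, he2⟩ | ⟨e, he1, he2⟩
    · rw [ih, ← he1, hstep e, he2]
    · rw [ih, ← he2, ← hstep e, he1]

end CLlemmas

end DirGraph

/-- Let `E` be connected, `I` an ideal of `KÊ` containing no edge of `E`,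
and `A = KÊ/I` (described here via the projection, i.e. working modulo `I`).
If `E⁰` is finite then `span p(E⁰) ∩ Z(A) = K·1`; if `E⁰` is infinite then
`span p(E⁰) ∩ Z(A) = 0`.  In particular, for `A` the Cohn (`t = false`) or Leavitt
(`t = true`) path algebra of a connected graph, `span E⁰ ∩ Z(A)` is `K·1` if `E⁰`
is finite and `0` otherwise. -/
theorem stmt10 (K : Type) [Field K] (E : DirGraph) (hconn : E.IsConnectedGraph)
    (I : Set (E.ext.PA K))
    (hI : IsIdealOf K (E.ext.KE K : Set (E.ext.PA K)) I)
    (hIe : ∀ e : E.Edge, E.ext.edg K (Sum.inl e) ∉ I) :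
    ((Finite E.V →
        ∀ z ∈ Submodule.span K (Set.range (E.ext.vtx K)),
          (∀ a ∈ E.ext.KE K, a * z - z * a ∈ I) →
          ∃ k : K, z - k • E.ext.unitKE K ∈ I) ∧
      (Infinite E.V →
        ∀ z ∈ Submodule.span K (Set.range (E.ext.vtx K)),
          (∀ a ∈ E.ext.KE K, a * z - z * a ∈ I) → z ∈ I) ∧
      (∀ k : K, k • E.ext.unitKE K ∈ Submodule.span K (Set.range (E.ext.vtx K)) ∧
        ∀ a ∈ E.ext.KE K,
          a * (k • E.ext.unitKE K) - (k • E.ext.unitKE K) * a ∈ I)) ∧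
    (∀ t : Bool,
      (Finite E.V →
        ∀ z ∈ Submodule.span K (Set.range (E.clvtx K t)),
          z ∈ E.clCenter K t → ∃ k : K, z = k • E.clOne K t) ∧
      (Finite E.V →
        ∀ k : K, k • E.clOne K t ∈ Submodule.span K (Set.range (E.clvtx K t)) ∧
          k • E.clOne K t ∈ E.clCenter K t) ∧
      (Infinite E.V →
        ∀ z ∈ Submodule.span K (Set.range (E.clvtx K t)),
          z ∈ E.clCenter K t → z = 0)) := by

  classical
  obtain ⟨hIS, hI0, hIadd, hIsmul, hImul⟩ := hI
  -- coefficient equality along edges, for the quotient KÊ/I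
  have key1 : ∀ c : E.ext.V →₀ K,
      (∀ a ∈ E.ext.KE K, a * (c.sum fun u a => a • E.ext.vtx K u)
        - (c.sum fun u a => a • E.ext.vtx K u) * a ∈ I) →
      ∀ e : E.Edge, c (E.s e) = c (E.r e) := by
    intro c hcomm e
    have hm := hcomm (E.ext.edg K (Sum.inl e)) (DirGraph.edg_mem K E.ext _)
    erw [DirGraph.edg_mul_finsuppSum, DirGraph.finsuppSum_mul_edg] at hm
    have hsub := sub_smul (c (E.ext.r (Sum.inl e))) (c (E.ext.s (Sum.inl e)))
      (E.ext.edg K (Sum.inl e))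
    rw [← hsub] at hm
    by_contra hne
    have hκ : c (E.ext.r (Sum.inl e)) - c (E.ext.s (Sum.inl e)) ≠ 0 :=
      sub_ne_zero.mpr (Ne.symm hne)
    have h2 := hIsmul (c (E.ext.r (Sum.inl e)) - c (E.ext.s (Sum.inl e)))⁻¹ _ hm
    rw [smul_smul, inv_mul_cancel₀ hκ, one_smul] at h2
    exact hIe e h2
  -- coefficient equality along edges, for the Cohn/Leavitt algebras
  have key2 : ∀ (t : Bool) (c : E.V →₀ K),
      (c.sum fun u a => a • E.clvtx K t u) ∈ E.clCenter K t →
      ∀ e : E.Edge, c (E.s e) = c (E.r e) := by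
    intro t c hz e
    have hm := hz.2 (E.cledg K t e) (DirGraph.cledg_mem K E t e)
    rw [DirGraph.cledg_mul_cl_finsuppSum, DirGraph.cl_finsuppSum_mul_cledg] at hm
    have h0 : (c (E.r e) - c (E.s e)) • E.cledg K t e = 0 := by
      have hsub := sub_smul (c (E.r e)) (c (E.s e)) (E.cledg K t e)
      rw [hm, sub_self] at hsub
      exact hsub
    have := DirGraph.cledg_smul_eq_zero K E t h0
    exact (sub_eq_zero.mp this).symm
  refine ⟨⟨?_, ?_, ?_⟩, ?_⟩
  · -- Part 1, finite case
    intro hVfin z hz hcomm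
    obtain ⟨c, rfl⟩ := (Finsupp.mem_span_range_iff_exists_finsupp).mp hz
    have hcc : ∀ u v : E.V, c u = c v :=
      DirGraph.const_of_conn K E hconn (key1 c hcomm)
    cases isEmpty_or_nonempty E.V with
    | inl hE =>
      refine ⟨0, ?_⟩
      have hc0 : c = 0 := Finsupp.ext fun u => (hE.elim u)
      rw [hc0, Finsupp.sum_zero_index, zero_smul, sub_zero]
      exact hI0
    | inr hne =>
      have : Fintype E.ext.V := @Fintype.ofFinite _ hVfin
      obtain ⟨v₀⟩ := hne
      refine ⟨c v₀, ?_⟩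
      have h1 : E.ext.unitKE K = ∑ u : E.ext.V, E.ext.vtx K u := by
        unfold DirGraph.unitKE; exact finsum_eq_sum_of_fintype _
      have h2 : (c.sum fun u a => a • E.ext.vtx K u) = ∑ u : E.ext.V, c u • E.ext.vtx K u :=
        Finsupp.sum_fintype _ _ (fun u => zero_smul K _)
      have h3 : ∀ u ∈ (Finset.univ : Finset E.ext.V),
          c u • E.ext.vtx K u = c v₀ • E.ext.vtx K u := fun u _ => by rw [hcc u v₀]
      rw [h2, h1, Finset.smul_sum, Finset.sum_congr rfl h3, sub_self]
      exact hI0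
  · -- Part 1, infinite case
    intro hVinf z hz hcomm
    obtain ⟨c, rfl⟩ := (Finsupp.mem_span_range_iff_exists_finsupp).mp hz
    have hcc : ∀ u v : E.V, c u = c v :=
      DirGraph.const_of_conn K E hconn (key1 c hcomm)
    have : Infinite E.ext.V := hVinf
    obtain ⟨v₀, hv₀⟩ := Infinite.exists_notMem_finset c.support
    have hc0 : c = 0 := Finsupp.ext fun u =>
      (hcc u v₀).trans (Finsupp.notMem_support_iff.mp hv₀)
    rw [hc0, Finsupp.sum_zero_index]
    exact hI0
  · -- Part 1, the scalars
    intro k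
    by_cases hsup : (Function.support fun u : E.V => E.ext.vtx K u).Finite
    · constructor
      · refine Submodule.smul_mem _ k ?_
        have : E.ext.unitKE K = ∑ u ∈ hsup.toFinset, E.ext.vtx K u := by
          unfold DirGraph.unitKE; exact finsum_eq_sum _ hsup
        rw [this]
        exact Submodule.sum_mem _ fun u _ => Submodule.subset_span ⟨u, rfl⟩
      · intro a ha
        obtain ⟨h1, h2⟩ := DirGraph.local_unit K E.ext hsup a ha
        rw [mul_smul_comm, smul_mul_assoc, h1, h2, sub_self]
        exact hI0
    · have h0 : E.ext.unitKE K = 0 := by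
        unfold DirGraph.unitKE; exact finsum_of_infinite_support hsup
      constructor
      · rw [h0, smul_zero]; exact Submodule.zero_mem _
      · intro a ha
        rw [h0, smul_zero, mul_zero, zero_mul, sub_zero]
        exact hI0
  · -- Part 2
    intro t
    refine ⟨?_, ?_, ?_⟩
    · -- finite case
      intro hVfin z hz hzc
      obtain ⟨c, rfl⟩ := (Finsupp.mem_span_range_iff_exists_finsupp).mp hz
      have hcc : ∀ u v : E.V, c u = c v :=
        DirGraph.const_of_conn K E hconn (key2 t c hzc)
      cases isEmpty_or_nonempty E.V with
      | inl hE =>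
        refine ⟨0, ?_⟩
        have hc0 : c = 0 := Finsupp.ext fun u => (hE.elim u)
        rw [hc0, Finsupp.sum_zero_index, zero_smul]
      | inr hne =>
        have : Fintype E.V := Fintype.ofFinite E.V
        obtain ⟨v₀⟩ := hne
        refine ⟨c v₀, ?_⟩
        have h1 : E.clOne K t = ∑ u : E.V, E.clvtx K t u := by
          unfold DirGraph.clOne; exact finsum_eq_sum_of_fintype _
        have h2 : (c.sum fun u a => a • E.clvtx K t u) = ∑ u : E.V, c u • E.clvtx K t u :=
          Finsupp.sum_fintype _ _ (fun u => zero_smul K _)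
        rw [h2, h1, Finset.smul_sum]
        exact Finset.sum_congr rfl (fun u _ => by rw [hcc u v₀])
    · -- the scalars
      intro hVfin k
      have : Fintype E.V := Fintype.ofFinite E.V
      have h1 : E.clOne K t = ∑ u : E.V, E.clvtx K t u := by
        unfold DirGraph.clOne; exact finsum_eq_sum_of_fintype _
      constructor
      · refine Submodule.smul_mem _ k ?_
        rw [h1]
        exact Submodule.sum_mem _ fun u _ => Submodule.subset_span ⟨u, rfl⟩
      · constructor
        · refine SMulMemClass.smul_mem k ?_
          rw [h1]
          exact sum_mem fun u _ => DirGraph.clvtx_mem K E t u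
        · intro a ha
          obtain ⟨h2, h3⟩ := DirGraph.cl_local_unit K E t a ha
          rw [mul_smul_comm, smul_mul_assoc, h2, h3]
    · -- infinite case
      intro hVinf z hz hzc
      obtain ⟨c, rfl⟩ := (Finsupp.mem_span_range_iff_exists_finsupp).mp hz
      have hcc : ∀ u v : E.V, c u = c v :=
        DirGraph.const_of_conn K E hconn (key2 t c hzc)
      obtain ⟨v₀, hv₀⟩ := Infinite.exists_notMem_finset c.support
      have hc0 : c = 0 := Finsupp.ext fun u =>
        (hcc u v₀).trans (Finsupp.notMem_support_iff.mp hv₀)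
      rw [hc0, Finsupp.sum_zero_index]
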